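/- arXiv:1711.08670 — 2 statements merged into one kernel-verified Lean document; each statement's English description precedes it below -/
import Mathlib

section
/- A transverse Markov trace on the tower of Hecke algebras with parameters α_n = τ_n(1) is multiplicative (i.e. τ_{n_1+n_2}(u_1 ⊗ u_2) = τ_{n_1}(u_1)τ_{n_2}(u_2)) if and only if α_n = α_1^n for all n ≥ 2. -/
noncomputable section

/-- Defining relations of the Hecke algebra with `n` generators
(the paper's `H_{n+1}`), over a commutative ring `C` with quadratic
parameter `z` (in the paper `z = q - q⁻¹`). -/
inductive HeckeRel (C : Type) [CommRing C] (z : C) (n : ℕ) :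
    FreeAlgebra C (Fin n) → FreeAlgebra C (Fin n) → Prop
  | comm (i j : Fin n) (h : (i : ℕ) + 2 ≤ (j : ℕ)) :
      HeckeRel C z n (FreeAlgebra.ι C i * FreeAlgebra.ι C j)
        (FreeAlgebra.ι C j * FreeAlgebra.ι C i)
  | braid (i j : Fin n) (h : (j : ℕ) = (i : ℕ) + 1) :
      HeckeRel C z n (FreeAlgebra.ι C i * FreeAlgebra.ι C j * FreeAlgebra.ι C i)
        (FreeAlgebra.ι C j * FreeAlgebra.ι C i * FreeAlgebra.ι C j)
  | quad (i : Fin n) :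
      HeckeRel C z n (FreeAlgebra.ι C i * FreeAlgebra.ι C i)
        (1 + z • FreeAlgebra.ι C i)

/-- The Hecke algebra with `n` generators `σ_1, …, σ_n` (the paper's `H_{n+1}`). -/
abbrev Hecke (C : Type) [CommRing C] (z : C) (n : ℕ) : Type :=
  RingQuot (HeckeRel C z n)

variable {C : Type} [CommRing C] {z : C} {n : ℕ}

/-- The generator `σ_{i+1}` of the Hecke algebra. -/
def Hecke.σ (i : Fin n) : Hecke C z n :=
  RingQuot.mkAlgHom C (HeckeRel C z n) (FreeAlgebra.ι C i)

lemma Hecke.σ_comm (i j : Fin n) (h : (i : ℕ) + 2 ≤ (j : ℕ)) :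
    Hecke.σ (z := z) i * Hecke.σ j = Hecke.σ j * Hecke.σ i := by
  have := RingQuot.mkAlgHom_rel C (HeckeRel.comm (C := C) (z := z) i j h)
  simpa only [map_mul, Hecke.σ] using this

lemma Hecke.σ_braid (i j : Fin n) (h : (j : ℕ) = (i : ℕ) + 1) :
    Hecke.σ (z := z) i * Hecke.σ j * Hecke.σ i = Hecke.σ j * Hecke.σ i * Hecke.σ j := by
  have := RingQuot.mkAlgHom_rel C (HeckeRel.braid (C := C) (z := z) i j h)
  simpa only [map_mul, Hecke.σ] using this

lemma Hecke.σ_quad (i : Fin n) :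
    Hecke.σ (z := z) i * Hecke.σ i = 1 + z • Hecke.σ i := by
  have := RingQuot.mkAlgHom_rel C (HeckeRel.quad (C := C) (z := z) i)
  simpa only [map_mul, map_add, map_one, map_smul, Hecke.σ] using this

lemma Hecke.σ_mul_inv (i : Fin n) :
    Hecke.σ (z := z) i * (Hecke.σ i - z • 1) = 1 := by
  rw [mul_sub, Hecke.σ_quad, mul_smul_comm, mul_one]; abel

lemma Hecke.inv_mul_σ (i : Fin n) :
    (Hecke.σ (z := z) i - z • 1) * Hecke.σ i = 1 := by
  rw [sub_mul, Hecke.σ_quad, smul_mul_assoc, one_mul]; abel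

/-- The generator `σ_{i+1}` as a unit. -/
def Hecke.σU (i : Fin n) : (Hecke C z n)ˣ :=
  ⟨Hecke.σ i, Hecke.σ i - z • 1, Hecke.σ_mul_inv i, Hecke.inv_mul_σ i⟩

/-- The natural embedding `H_{m+1} → H_{n+1}` (`ι` iterated). -/
def Hecke.ιle {m n : ℕ} (h : m ≤ n) : Hecke C z m →ₐ[C] Hecke C z n :=
  RingQuot.liftAlgHom C ⟨FreeAlgebra.lift C (fun i => Hecke.σ (Fin.castLE h i)), by
    rintro x y hxy
    induction hxy with
    | comm i j hij =>
        simp only [map_mul, FreeAlgebra.lift_ι_apply]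
        exact Hecke.σ_comm _ _ (by simpa using hij)
    | braid i j hij =>
        simp only [map_mul, FreeAlgebra.lift_ι_apply]
        exact Hecke.σ_braid _ _ (by simpa using hij)
    | quad i =>
        simp only [map_mul, map_add, map_one, map_smul, FreeAlgebra.lift_ι_apply]
        exact Hecke.σ_quad _⟩

/-- The shift morphism `sh^m : H_{l+1} → H_{l+m+1}`, sending `σ_i` to `σ_{i+m}`. -/
def Hecke.shift (m : ℕ) {l : ℕ} : Hecke C z l →ₐ[C] Hecke C z (m + l) :=
  RingQuot.liftAlgHom C ⟨FreeAlgebra.lift C (fun i => Hecke.σ (Fin.natAdd m i)), by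
    rintro x y hxy
    induction hxy with
    | comm i j hij =>
        simp only [map_mul, FreeAlgebra.lift_ι_apply]
        exact Hecke.σ_comm _ _ (by simp [Fin.natAdd]; omega)
    | braid i j hij =>
        simp only [map_mul, FreeAlgebra.lift_ι_apply]
        exact Hecke.σ_braid _ _ (by simp [Fin.natAdd]; omega)
    | quad i =>
        simp only [map_mul, map_add, map_one, map_smul, FreeAlgebra.lift_ι_apply]
        exact Hecke.σ_quad _⟩


/-- A transverse Markov trace on the tower of Hecke algebras: a family of `R`-linear maps
with the trace property and only the positive stabilization property. -/
def IsHeckeTransverseTrace {C : Type} [CommRing C] (a : Cˣ) (z : C)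
    (t : ∀ m : ℕ, Hecke C z m →ₗ[C] C) : Prop :=
  (∀ (m : ℕ) (u v : Hecke C z m), t m (u * v) = t m (v * u)) ∧
  (∀ (m : ℕ) (u v : Hecke C z m),
    t (m + 1) (Hecke.ιle (Nat.le_succ m) u * Hecke.σ (Fin.last m) *
        Hecke.ιle (Nat.le_succ m) v) = (a : C) * t m (u * v))

variable {C : Type} [CommRing C] {z : C} {n : ℕ}

lemma Hecke.induction {motive : Hecke C z n → Prop}
    (halg : ∀ c, motive (algebraMap C (Hecke C z n) c))
    (hgen : ∀ i, motive (Hecke.σ i))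
    (hadd : ∀ x y, motive x → motive y → motive (x + y))
    (hmul : ∀ x y, motive x → motive y → motive (x * y)) : ∀ x, motive x := by
  intro x
  obtain ⟨x, rfl⟩ := RingQuot.mkAlgHom_surjective C (HeckeRel C z n) x
  induction x using FreeAlgebra.induction with
  | grade0 c => rw [AlgHom.commutes]; exact halg c
  | grade1 i => exact hgen i
  | mul x y hx hy => rw [map_mul]; exact hmul _ _ hx hy
  | add x y hx hy => rw [map_add]; exact hadd _ _ hx hy

@[simp] lemma Hecke.ιle_σ {m : ℕ} (h : m ≤ n) (i : Fin m) :
    Hecke.ιle (C := C) (z := z) h (Hecke.σ i) = Hecke.σ (Fin.castLE h i) := by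
  rw [Hecke.ιle, Hecke.σ, RingQuot.liftAlgHom_mkAlgHom_apply, FreeAlgebra.lift_ι_apply]

@[simp] lemma Hecke.shift_σ (m : ℕ) {l : ℕ} (i : Fin l) :
    Hecke.shift (C := C) (z := z) m (Hecke.σ i) = Hecke.σ (Fin.natAdd m i) := by
  rw [Hecke.shift, Hecke.σ, RingQuot.liftAlgHom_mkAlgHom_apply, FreeAlgebra.lift_ι_apply]

lemma Hecke.ιle_ιle {l m : ℕ} (h₁ : l ≤ m) (h₂ : m ≤ n) (u : Hecke C z l) :
    Hecke.ιle h₂ (Hecke.ιle h₁ u) = Hecke.ιle (h₁.trans h₂) u := by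
  induction u using Hecke.induction with
  | halg c => simp [AlgHom.commutes]
  | hgen i => simp
  | hadd x y hx hy => simp [map_add, hx, hy]
  | hmul x y hx hy => simp [map_mul, hx, hy]

lemma Hecke.shift_ιle {m l l' : ℕ} (h : l ≤ l') (u : Hecke C z l) :
    Hecke.shift m (Hecke.ιle h u)
      = Hecke.ιle (by omega : m + l ≤ m + l') (Hecke.shift m u) := by
  induction u using Hecke.induction with
  | halg c => simp [AlgHom.commutes]
  | hgen i => simp only [Hecke.ιle_σ, Hecke.shift_σ]; congr 1
  | hadd x y hx hy => simp [map_add, hx, hy]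
  | hmul x y hx hy => simp [map_mul, hx, hy]

lemma Hecke.zero_scalar (x : Hecke C z 0) : ∃ c : C, x = algebraMap C _ c := by
  induction x using Hecke.induction with
  | halg c => exact ⟨c, rfl⟩
  | hgen i => exact absurd i.2 (by omega)
  | hadd x y hx hy =>
      obtain ⟨c, rfl⟩ := hx; obtain ⟨d, rfl⟩ := hy; exact ⟨c + d, (map_add _ _ _).symm⟩
  | hmul x y hx hy =>
      obtain ⟨c, rfl⟩ := hx; obtain ⟨d, rfl⟩ := hy; exact ⟨c * d, (map_mul _ _ _).symm⟩

lemma Hecke.ιle_comm_σ {m : ℕ} (h : m ≤ n) (x : Hecke C z m) (i : Fin n)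
    (hi : m + 1 ≤ (i : ℕ)) :
    Hecke.ιle h x * Hecke.σ i = Hecke.σ i * Hecke.ιle h x := by
  induction x using Hecke.induction with
  | halg c => rw [AlgHom.commutes, Algebra.commutes]
  | hgen j =>
      rw [Hecke.ιle_σ]
      exact Hecke.σ_comm _ _ (by simp; omega)
  | hadd x y hx hy => simp only [map_add, add_mul, mul_add, hx, hy]
  | hmul x y hx hy => rw [map_mul, mul_assoc, hy, ← mul_assoc, hx, mul_assoc]

lemma Hecke.ιle_refl (u : Hecke C z n) : Hecke.ιle (le_refl n) u = u := by
  induction u using Hecke.induction with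
  | halg c => rw [AlgHom.commutes]
  | hgen i => rw [Hecke.ιle_σ]; congr 1
  | hadd x y hx hy => rw [map_add, hx, hy]
  | hmul x y hx hy => rw [map_mul, hx, hy]

/-- The spanning set: elements from the smaller algebra, and sandwiches around the
top generator. -/
def heckeGens (m : ℕ) : Set (Hecke C z (m + 1)) :=
  {x | (∃ u : Hecke C z m, x = Hecke.ιle (Nat.le_succ m) u) ∨
       (∃ u v : Hecke C z m, x = Hecke.ιle (Nat.le_succ m) u * Hecke.σ (Fin.last m) *
          Hecke.ιle (Nat.le_succ m) v)}

def heckeSpan (m : ℕ) : Submodule C (Hecke C z (m + 1)) :=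
  Submodule.span C (heckeGens (z := z) m)

lemma mem_heckeSpan_left {m : ℕ} (u : Hecke C z m) :
    Hecke.ιle (Nat.le_succ m) u ∈ heckeSpan (z := z) m :=
  Submodule.subset_span (Or.inl ⟨u, rfl⟩)

lemma mem_heckeSpan_mid {m : ℕ} (u v : Hecke C z m) :
    Hecke.ιle (Nat.le_succ m) u * Hecke.σ (Fin.last m) * Hecke.ιle (Nat.le_succ m) v
      ∈ heckeSpan (z := z) m :=
  Submodule.subset_span (Or.inr ⟨u, v, rfl⟩)

lemma heckeSpan_mul_ιle {m : ℕ} {s : Hecke C z (m + 1)} (hs : s ∈ heckeSpan (z := z) m)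
    (w : Hecke C z m) : s * Hecke.ιle (Nat.le_succ m) w ∈ heckeSpan (z := z) m := by
  induction hs using Submodule.span_induction with
  | mem x hx =>
      rcases hx with ⟨u, rfl⟩ | ⟨u, v, rfl⟩
      · rw [← map_mul]; exact mem_heckeSpan_left _
      · rw [mul_assoc, ← map_mul]; exact mem_heckeSpan_mid _ _
  | zero => rw [zero_mul]; exact Submodule.zero_mem _
  | add x y hx hy ihx ihy => rw [add_mul]; exact Submodule.add_mem _ ihx ihy
  | smul c x hx ihx => rw [smul_mul_assoc]; exact Submodule.smul_mem _ _ ihx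

lemma ιle_mul_heckeSpan {m : ℕ} {s : Hecke C z (m + 1)} (hs : s ∈ heckeSpan (z := z) m)
    (w : Hecke C z m) : Hecke.ιle (Nat.le_succ m) w * s ∈ heckeSpan (z := z) m := by
  induction hs using Submodule.span_induction with
  | mem x hx =>
      rcases hx with ⟨u, rfl⟩ | ⟨u, v, rfl⟩
      · rw [← map_mul]; exact mem_heckeSpan_left _
      · rw [← mul_assoc, ← mul_assoc, ← map_mul]; exact mem_heckeSpan_mid _ _
  | zero => rw [mul_zero]; exact Submodule.zero_mem _
  | add x y hx hy ihx ihy => rw [mul_add]; exact Submodule.add_mem _ ihx ihy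
  | smul c x hx ihx => rw [mul_smul_comm]; exact Submodule.smul_mem _ _ ihx

lemma one_mem_heckeSpan {m : ℕ} : (1 : Hecke C z (m + 1)) ∈ heckeSpan (z := z) m := by
  have := mem_heckeSpan_left (z := z) (1 : Hecke C z m)
  rwa [map_one] at this


lemma heckeSpan_top_of_key {m : ℕ}
    (hkey : ∀ u v : Hecke C z m,
      Hecke.σ (Fin.last m) * Hecke.ιle (Nat.le_succ m) u * Hecke.σ (Fin.last m) *
        Hecke.ιle (Nat.le_succ m) v ∈ heckeSpan (z := z) m) :
    ∀ x : Hecke C z (m + 1), x ∈ heckeSpan (z := z) m := by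
  have hσ : ∀ (i : Fin (m + 1)) (s : Hecke C z (m + 1)), s ∈ heckeSpan (z := z) m →
      Hecke.σ i * s ∈ heckeSpan (z := z) m := by
    intro i s hs
    rcases Nat.lt_or_ge (i : ℕ) m with hi | hi
    · have : Hecke.σ (z := z) i = Hecke.ιle (Nat.le_succ m) (Hecke.σ ⟨(i : ℕ), hi⟩) := by
        rw [Hecke.ιle_σ]; congr 1
      rw [this]; exact ιle_mul_heckeSpan hs _
    · have hil : i = Fin.last m := Fin.ext (le_antisymm (Nat.lt_succ_iff.mp i.2) hi)
      subst hil
      induction hs using Submodule.span_induction with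
      | mem x hx =>
          rcases hx with ⟨u, rfl⟩ | ⟨u, v, rfl⟩
          · have := mem_heckeSpan_mid (z := z) 1 u
            rwa [map_one, one_mul] at this
          · rw [← mul_assoc, ← mul_assoc]; exact hkey u v
      | zero => rw [mul_zero]; exact Submodule.zero_mem _
      | add x y hx hy ihx ihy => rw [mul_add]; exact Submodule.add_mem _ ihx ihy
      | smul c x hx ihx => rw [mul_smul_comm]; exact Submodule.smul_mem _ _ ihx
  have hmul : ∀ y s : Hecke C z (m + 1), s ∈ heckeSpan (z := z) m →
      y * s ∈ heckeSpan (z := z) m := by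
    intro y
    induction y using Hecke.induction with
    | halg c =>
        intro s hs
        rw [← Algebra.smul_def]; exact Submodule.smul_mem _ _ hs
    | hgen i => exact hσ i
    | hadd x y hx hy => intro s hs; rw [add_mul]; exact Submodule.add_mem _ (hx s hs) (hy s hs)
    | hmul x y hx hy => intro s hs; rw [mul_assoc]; exact hx _ (hy s hs)
  intro x
  have := hmul x 1 one_mem_heckeSpan
  rwa [mul_one] at this

theorem heckeSpan_main (m : ℕ) :
    (∀ u v : Hecke C z m,
      Hecke.σ (Fin.last m) * Hecke.ιle (Nat.le_succ m) u * Hecke.σ (Fin.last m) *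
        Hecke.ιle (Nat.le_succ m) v ∈ heckeSpan (z := z) m) ∧
    (∀ x : Hecke C z (m + 1), x ∈ heckeSpan (z := z) m) := by
  induction m with
  | zero =>
      have hkey : ∀ u v : Hecke C z 0,
          Hecke.σ (Fin.last 0) * Hecke.ιle (Nat.le_succ 0) u * Hecke.σ (Fin.last 0) *
            Hecke.ιle (Nat.le_succ 0) v ∈ heckeSpan (z := z) 0 := by
        intro u v
        obtain ⟨c, rfl⟩ := Hecke.zero_scalar u
        rw [AlgHom.commutes, Algebra.algebraMap_eq_smul_one, mul_smul_comm, mul_one,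
          smul_mul_assoc, smul_mul_assoc, Hecke.σ_quad, add_mul, one_mul, smul_mul_assoc]
        refine Submodule.smul_mem _ _ (Submodule.add_mem _ (mem_heckeSpan_left _)
          (Submodule.smul_mem _ _ ?_))
        have := mem_heckeSpan_mid (z := z) (1 : Hecke C z 0) v
        rwa [map_one, one_mul] at this
      exact ⟨hkey, heckeSpan_top_of_key hkey⟩
  | succ m ih =>
      set s : Hecke C z (m + 2) := Hecke.σ (Fin.last (m + 1)) with hs_def
      set g : Hecke C z (m + 2) := Hecke.σ (Fin.castLE (Nat.le_succ (m + 1)) (Fin.last m))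
        with hg_def
      have hbr : s * g * s = g * s * g := by
        refine (Hecke.σ_braid _ _ ?_).symm
        simp [Fin.last]
      have hquad : s * s = 1 + z • s := Hecke.σ_quad _
      -- commutation of embedded elements of `Hecke m` with `s`
      have hcomm : ∀ p : Hecke C z m,
          Hecke.ιle (by omega : m ≤ m + 2) p * s = s * Hecke.ιle (by omega) p := by
        intro p
        exact Hecke.ιle_comm_σ _ p _ (by simp [Fin.last])
      have hkey : ∀ u v : Hecke C z (m + 1),
          s * Hecke.ιle (Nat.le_succ (m + 1)) u * s *
            Hecke.ιle (Nat.le_succ (m + 1)) v ∈ heckeSpan (z := z) (m + 1) := by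
        intro u v
        induction ih.2 u using Submodule.span_induction with
        | mem x hx =>
            rcases hx with ⟨p, rfl⟩ | ⟨p, q, rfl⟩
            · -- quadratic case
              rw [Hecke.ιle_ιle]
              set P := Hecke.ιle (z := z) (by omega : m ≤ m + 2) p with hP
              set V := Hecke.ιle (z := z) (Nat.le_succ (m + 1)) v with hV
              have hp : P * s = s * P := hcomm p
              have e : s * P * s * V = P * V + z • (P * (s * V)) := by
                rw [← hp, mul_assoc P s s, hquad, mul_add, mul_one, mul_smul_comm,
                  add_mul, smul_mul_assoc, mul_assoc]
              rw [e]
              refine Submodule.add_mem _ ?_ (Submodule.smul_mem _ _ ?_)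
              · rw [hP, hV, ← Hecke.ιle_ιle (Nat.le_succ m) (Nat.le_succ (m + 1)), ← map_mul]
                exact mem_heckeSpan_left _
              · rw [hP, hV, ← Hecke.ιle_ιle (Nat.le_succ m) (Nat.le_succ (m + 1)),
                  ← mul_assoc]
                exact mem_heckeSpan_mid _ _
            · -- braid case
              rw [map_mul, map_mul, Hecke.ιle_σ, Hecke.ιle_ιle, Hecke.ιle_ιle]
              set P := Hecke.ιle (z := z) (by omega : m ≤ m + 2) p with hP
              set Q := Hecke.ιle (z := z) (by omega : m ≤ m + 2) q with hQ
              set V := Hecke.ιle (z := z) (Nat.le_succ (m + 1)) v with hV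
              have hp : P * s = s * P := hcomm p
              have hq : Q * s = s * Q := hcomm q
              have hp' : ∀ x, s * (P * x) = P * (s * x) := fun x => by
                rw [← mul_assoc, ← hp, mul_assoc]
              have hq' : ∀ x, Q * (s * x) = s * (Q * x) := fun x => by
                rw [← mul_assoc, hq, mul_assoc]
              have hbr' : ∀ x, s * (g * (s * x)) = g * (s * (g * x)) := fun x => by
                rw [← mul_assoc, ← mul_assoc, hbr, mul_assoc, mul_assoc]
              have e : s * (P * g * Q) * s * V = (P * g) * s * (g * (Q * V)) := by
                simp only [mul_assoc]
                rw [hp', hq', hbr']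
              rw [e, hP, hQ, hV, ← Hecke.ιle_ιle (Nat.le_succ m) (Nat.le_succ (m + 1)),
                ← Hecke.ιle_ιle (Nat.le_succ m) (Nat.le_succ (m + 1))]
              have hgeq : g = Hecke.ιle (Nat.le_succ (m + 1)) (Hecke.σ (Fin.last m)) := by
                rw [Hecke.ιle_σ]
              rw [hgeq, ← map_mul, ← map_mul, ← map_mul]
              exact mem_heckeSpan_mid _ _
        | zero => rw [map_zero, mul_zero, zero_mul, zero_mul]; exact Submodule.zero_mem _
        | add x y hx hy ihx ihy =>
            rw [map_add, mul_add, add_mul, add_mul]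
            exact Submodule.add_mem _ ihx ihy
        | smul c x hx ihx =>
            rw [map_smul, mul_smul_comm, smul_mul_assoc, smul_mul_assoc]
            exact Submodule.smul_mem _ _ ihx
      exact ⟨hkey, heckeSpan_top_of_key hkey⟩

section Trace

variable (a : Cˣ) (t : ∀ m : ℕ, Hecke C z m →ₗ[C] C)

theorem hecke_trace_aux (ht : IsHeckeTransverseTrace a z t)
    (halg : ∀ m : ℕ, t m 1 = (t 0 1) ^ (m + 1)) : ∀ n : ℕ,
    (∀ m k, ∀ _ : m + k = n, ∀ u : Hecke C z m,
      t n (Hecke.ιle (by omega : m ≤ n) u) = (t 0 1) ^ k * t m u) ∧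
    (∀ j k, ∀ _ : j + k + 1 = n, ∀ x : Hecke C z j,
      t n (Hecke.σ ⟨j, by omega⟩ * Hecke.ιle (by omega : j ≤ n) x)
        = (a : C) * (t 0 1) ^ k * t j x) := by
  set α : C := t 0 1 with hα
  intro n
  induction n using Nat.strong_induction_on with
  | _ n IH =>
  -- Part 2 first
  have part2 : ∀ k j, ∀ _ : j + k + 1 = n, ∀ x : Hecke C z j,
      t n (Hecke.σ ⟨j, by omega⟩ * Hecke.ιle (by omega : j ≤ n) x)
        = (a : C) * α ^ k * t j x := by
    intro k
    induction k with
    | zero =>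
        intro j hj x
        subst hj
        have hst := ht.2 j x 1
        rw [map_one, mul_one, mul_one] at hst
        rw [ht.1 (j + 0 + 1) (Hecke.σ ⟨j, by omega⟩) (Hecke.ιle (by omega) x),
          pow_zero, mul_one]
        exact hst
    | succ k IHk =>
        intro j hj x
        have hjn : j < n := by omega
        have hj1n : j + 1 < n := by omega
        set S : Hecke C z n := Hecke.σ ⟨j, by omega⟩ with hS
        set G : Hecke C z n := Hecke.σ ⟨j + 1, by omega⟩ with hG
        set X : Hecke C z n := Hecke.ιle (by omega : j ≤ n) x with hX
        set S' : Hecke C z n := S - z • 1 with hS'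
        set G' : Hecke C z n := G - z • 1 with hG'
        have hSinv : S * S' = 1 := Hecke.σ_mul_inv _
        have hGinv : G * G' = 1 := Hecke.σ_mul_inv _
        have hGinv' : G' * G = 1 := Hecke.inv_mul_σ _
        have hbraid : S * G * S = G * S * G := Hecke.σ_braid _ _ rfl
        have hXG : X * G = G * X := by
          rw [hX, hG]; exact Hecke.ιle_comm_σ _ x _ (by simp)
        have hXG' : X * G' = G' * X := by
          rw [hG', mul_sub, sub_mul, hXG, mul_smul_comm, smul_mul_assoc, mul_one, one_mul]
        have h1 : G * (S * G * S') = S * G := by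
          rw [← mul_assoc, ← mul_assoc, ← hbraid, mul_assoc, mul_assoc, hSinv, mul_one]
        have hconj : G' * (S * G) = S * G * S' := by
          conv_lhs => rw [← h1]
          rw [← mul_assoc, hGinv', one_mul]
        have claimA : t n (G * (S' * X * S)) = t n (S * X) := by
          calc t n (G * (S' * X * S)) = t n ((S' * X * S) * G) := ht.1 n _ _
            _ = t n (S' * (X * (S * G))) := by rw [mul_assoc, mul_assoc]
            _ = t n ((X * (S * G)) * S') := ht.1 n _ _
            _ = t n (X * (S * G * S')) := by rw [mul_assoc]
            _ = t n (X * (G' * (S * G))) := by rw [hconj]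
            _ = t n ((X * G') * (S * G)) := by rw [mul_assoc]
            _ = t n ((G' * X) * (S * G)) := by rw [hXG']
            _ = t n ((G' * (X * S)) * G) := by simp only [mul_assoc]
            _ = t n (G * (G' * (X * S))) := ht.1 n _ _
            _ = t n ((G * G') * (X * S)) := by rw [← mul_assoc]
            _ = t n (X * S) := by rw [hGinv, one_mul]
            _ = t n (S * X) := ht.1 n _ _
        -- the conjugated element downstairs
        set S₀ : Hecke C z (j + 1) := Hecke.σ (Fin.last j) with hS₀
        set y : Hecke C z (j + 1) :=
          (S₀ - z • 1) * Hecke.ιle (Nat.le_succ j) x * S₀ with hy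
        have hemb : Hecke.ιle (by omega : j + 1 ≤ n) y = S' * X * S := by
          rw [hy, map_mul, map_mul, map_sub, map_smul, map_one, Hecke.ιle_σ,
            Hecke.ιle_ιle, hS', hX, hS]
          rfl
        have hty : t (j + 1) y = α * t j x := by
          have h2 : t (j + 1) y = t (j + 1) (S₀ * ((S₀ - z • 1) *
              Hecke.ιle (Nat.le_succ j) x)) := by
            rw [hy]
            exact ht.1 _ _ _
          rw [h2, ← mul_assoc, Hecke.σ_mul_inv, one_mul]
          have h3 := (IH (j + 1) (by omega)).1 j 1 rfl x
          rw [pow_one] at h3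
          exact h3
        have happ := IHk (j + 1) (by omega) y
        rw [hemb] at happ
        rw [← claimA, hG, happ, hty, pow_succ]
        ring
  -- Part 1
  have part1 : ∀ m k, ∀ _ : m + k = n, ∀ u : Hecke C z m,
      t n (Hecke.ιle (by omega : m ≤ n) u) = α ^ k * t m u := by
    intro m
    induction m using Nat.strong_induction_on with
    | _ m IHm =>
    intro k hk u
    match m, IHm, hk, u with
    | 0, _, hk, u =>
        obtain ⟨c, rfl⟩ := Hecke.zero_scalar u
        rw [AlgHom.commutes,
          show (algebraMap C (Hecke C z n)) c = c • 1 from Algebra.algebraMap_eq_smul_one c,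
          show (algebraMap C (Hecke C z 0)) c = c • 1 from Algebra.algebraMap_eq_smul_one c,
          map_smul, map_smul, halg n, halg 0, smul_eq_mul, smul_eq_mul, pow_one]
        have hnk : n = k := by omega
        subst hnk
        ring
    | m' + 1, IHm, hk, u =>
        induction (heckeSpan_main m').2 u using Submodule.span_induction with
        | mem v hv =>
            rcases hv with ⟨p, rfl⟩ | ⟨p, q, rfl⟩
            · have e : Hecke.ιle (by omega : m' + 1 ≤ n) (Hecke.ιle (Nat.le_succ m') p)
                  = Hecke.ιle (by omega : m' ≤ n) p := Hecke.ιle_ιle _ _ _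
              rw [e, IHm m' (by omega) (k + 1) (by omega) p]
              have hR : t (m' + 1) (Hecke.ιle (Nat.le_succ m') p) = α * t m' p := by
                rcases Nat.lt_or_ge (m' + 1) n with hlt | hge
                · have h4 := (IH (m' + 1) hlt).1 m' 1 rfl p
                  rw [pow_one] at h4
                  exact h4
                · have hn : m' + 1 = n := by omega
                  subst hn
                  have h4 := IHm m' (by omega) 1 (by omega) p
                  rw [pow_one] at h4
                  exact h4
              rw [hR, pow_succ]
              ring
            · have e : Hecke.ιle (by omega : m' + 1 ≤ n)
                  (Hecke.ιle (Nat.le_succ m') p * Hecke.σ (Fin.last m') *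
                    Hecke.ιle (Nat.le_succ m') q)
                  = Hecke.ιle (by omega : m' ≤ n) p * Hecke.σ ⟨m', by omega⟩ *
                    Hecke.ιle (by omega : m' ≤ n) q := by
                rw [map_mul, map_mul, Hecke.ιle_σ, Hecke.ιle_ιle, Hecke.ιle_ιle]
                rfl
              rw [e]
              have htr : t n (Hecke.ιle (by omega : m' ≤ n) p * Hecke.σ ⟨m', by omega⟩ *
                    Hecke.ιle (by omega : m' ≤ n) q)
                  = t n (Hecke.σ ⟨m', by omega⟩ * Hecke.ιle (by omega : m' ≤ n) (q * p)) := by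
                rw [map_mul (Hecke.ιle (by omega : m' ≤ n)) q p]
                calc t n (Hecke.ιle (by omega : m' ≤ n) p * Hecke.σ ⟨m', by omega⟩ *
                      Hecke.ιle (by omega : m' ≤ n) q)
                    = t n (Hecke.ιle (by omega : m' ≤ n) q *
                        (Hecke.ιle (by omega : m' ≤ n) p * Hecke.σ ⟨m', by omega⟩)) :=
                      ht.1 n _ _
                  _ = t n ((Hecke.ιle (by omega : m' ≤ n) q *
                        Hecke.ιle (by omega : m' ≤ n) p) * Hecke.σ ⟨m', by omega⟩) := by
                      rw [mul_assoc]
                  _ = t n (Hecke.σ ⟨m', by omega⟩ * (Hecke.ιle (by omega : m' ≤ n) q *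
                        Hecke.ιle (by omega : m' ≤ n) p)) := ht.1 n _ _
              rw [htr, part2 k m' (by omega) (q * p), ht.2 m' p q, ht.1 m' p q]
              ring
        | zero => rw [map_zero, map_zero, map_zero, mul_zero]
        | add x y hx hy ihx ihy =>
            rw [map_add, map_add, map_add, ihx, ihy]; ring
        | smul c x hx ihx =>
            rw [map_smul, map_smul, map_smul, ihx, smul_eq_mul, smul_eq_mul]; ring
  exact ⟨part1, fun j k h x => part2 k j h x⟩

end Trace
/-- A transverse Markov trace on the tower of Hecke algebras with
parameters `α_n = τ_n(1)` is multiplicative, i.e.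
`τ_{n₁+n₂}(u₁ ⊗ u₂) = τ_{n₁}(u₁) τ_{n₂}(u₂)` where `u₂` is placed on the strands
`n₁+1, …, n₁+n₂` via the shift, if and only if `α_n = α_1ⁿ` for all `n ≥ 2`. -/
theorem hecke_transverse_trace_multiplicative_iff (C : Type) [CommRing C]
    (a q : Cˣ) (z : C) (hz : z = (q : C) - ((q⁻¹ : Cˣ) : C))
    (t : ∀ m : ℕ, Hecke C z m →ₗ[C] C) (ht : IsHeckeTransverseTrace a z t) :
    (∀ (l₁ l₂ : ℕ) (u₁ : Hecke C z l₁) (u₂ : Hecke C z l₂),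
        t (l₁ + 1 + l₂) (Hecke.ιle (by omega) u₁ * Hecke.shift (l₁ + 1) u₂)
          = t l₁ u₁ * t l₂ u₂)
      ↔ (∀ m : ℕ, t m 1 = (t 0 1) ^ (m + 1)) := by
  constructor
  · intro h m
    induction m with
    | zero => exact (pow_one _).symm
    | succ m ihm =>
        have h0 := h m 0 1 1
        rw [map_one, map_one, one_mul] at h0
        calc t (m + 1) 1 = t m 1 * t 0 1 := h0
          _ = (t 0 1) ^ (m + 1) * t 0 1 := by rw [ihm]
          _ = (t 0 1) ^ (m + 1 + 1) := (pow_succ _ _).symm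
  · intro halg l₁ l₂ u₁ u₂
    induction l₂ with
    | zero =>
        obtain ⟨c, rfl⟩ := Hecke.zero_scalar u₂
        have key : t (l₁ + 1) (Hecke.ιle (Nat.le_succ l₁) u₁ *
            Hecke.shift (l₁ + 1) (algebraMap C (Hecke C z 0) c))
            = t l₁ u₁ * t 0 (algebraMap C (Hecke C z 0) c) := by
          have e0 : Hecke.shift (l₁ + 1) (algebraMap C (Hecke C z 0) c)
              = algebraMap C (Hecke C z (l₁ + 1 + 0)) c := AlgHom.commutes _ c
          rw [e0, Algebra.algebraMap_eq_smul_one, Algebra.algebraMap_eq_smul_one,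
            mul_smul_comm, mul_one, map_smul, map_smul, smul_eq_mul, smul_eq_mul]
          have e := (hecke_trace_aux a t ht halg (l₁ + 1)).1 l₁ 1 rfl u₁
          rw [pow_one] at e
          rw [e]
          ring
        exact key
    | succ l ihl =>
        induction (heckeSpan_main l).2 u₂ using Submodule.span_induction with
        | mem v hv =>
            rcases hv with ⟨y, rfl⟩ | ⟨p, q, rfl⟩
            · have etot : Hecke.ιle (by omega : l₁ ≤ l₁ + 1 + (l + 1)) u₁ *
                  Hecke.shift (l₁ + 1) (Hecke.ιle (Nat.le_succ l) y)
                  = Hecke.ιle (by omega : l₁ + 1 + l ≤ l₁ + 1 + (l + 1))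
                      (Hecke.ιle (by omega : l₁ ≤ l₁ + 1 + l) u₁ *
                        Hecke.shift (l₁ + 1) y) := by
                rw [Hecke.shift_ιle,
                  map_mul (Hecke.ιle (by omega : l₁ + 1 + l ≤ l₁ + 1 + (l + 1))),
                  Hecke.ιle_ιle]
              rw [etot]
              have e3 := (hecke_trace_aux a t ht halg (l₁ + 1 + (l + 1))).1 (l₁ + 1 + l) 1
                (by omega) (Hecke.ιle (by omega : l₁ ≤ l₁ + 1 + l) u₁ *
                  Hecke.shift (l₁ + 1) y)
              rw [pow_one] at e3
              rw [e3, ihl y]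
              have e4 := (hecke_trace_aux a t ht halg (l + 1)).1 l 1 rfl y
              rw [pow_one] at e4
              rw [e4]
              ring
            · have etot : Hecke.ιle (by omega : l₁ ≤ l₁ + 1 + (l + 1)) u₁ *
                  Hecke.shift (l₁ + 1) (Hecke.ιle (Nat.le_succ l) p * Hecke.σ (Fin.last l) *
                    Hecke.ιle (Nat.le_succ l) q)
                  = Hecke.ιle (by omega : l₁ + 1 + l ≤ l₁ + 1 + (l + 1))
                      (Hecke.ιle (by omega : l₁ ≤ l₁ + 1 + l) u₁ * Hecke.shift (l₁ + 1) p) *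
                    Hecke.σ (Fin.natAdd (l₁ + 1) (Fin.last l)) *
                    Hecke.ιle (by omega : l₁ + 1 + l ≤ l₁ + 1 + (l + 1))
                      (Hecke.shift (l₁ + 1) q) := by
                rw [map_mul (Hecke.shift (l₁ + 1)), map_mul (Hecke.shift (l₁ + 1)),
                  Hecke.shift_σ, Hecke.shift_ιle, Hecke.shift_ιle,
                  map_mul (Hecke.ιle (by omega : l₁ + 1 + l ≤ l₁ + 1 + (l + 1))),
                  Hecke.ιle_ιle]
                simp only [mul_assoc]
              rw [etot]
              have h8 : t (l₁ + 1 + l + 1)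
                  (Hecke.ιle (Nat.le_succ (l₁ + 1 + l))
                      (Hecke.ιle (by omega : l₁ ≤ l₁ + 1 + l) u₁ * Hecke.shift (l₁ + 1) p) *
                    Hecke.σ (Fin.last (l₁ + 1 + l)) *
                    Hecke.ιle (Nat.le_succ (l₁ + 1 + l)) (Hecke.shift (l₁ + 1) q))
                  = t l₁ u₁ * t (l + 1) (Hecke.ιle (Nat.le_succ l) p * Hecke.σ (Fin.last l) *
                      Hecke.ιle (Nat.le_succ l) q) := by
                rw [ht.2 (l₁ + 1 + l) _ _]
                have e6 : Hecke.ιle (by omega : l₁ ≤ l₁ + 1 + l) u₁ *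
                      Hecke.shift (l₁ + 1) p * Hecke.shift (l₁ + 1) q
                    = Hecke.ιle (by omega : l₁ ≤ l₁ + 1 + l) u₁ *
                      Hecke.shift (l₁ + 1) (p * q) := by
                  rw [map_mul (Hecke.shift (l₁ + 1)), mul_assoc]
                rw [e6, ihl (p * q), ht.2 l p q]
                ring
              exact h8
        | zero => simp only [map_zero, mul_zero]
        | add x y hx hy ihx ihy =>
            simp only [map_add, mul_add]
            rw [ihx, ihy]
        | smul c x hx ihx =>
            simp only [map_smul, mul_smul_comm, smul_eq_mul]
            rw [ihx]
            ring

end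
end

section
/- Let (τ_n) be a transverse Markov trace on the tower of BMW algebras. Then for all n ≥ 1 and v ∈ BMW_n: τ_{n+2}(v e_{n+1}) = δ τ_{n+1}(v e_n), where δ = (a−a^{−1})/(q−q^{−1}) + 1. -/
noncomputable section

open FreeAlgebra

/-- In the free algebra on generators `inl i ↦ s_i`, `inr i ↦ s_i⁻¹`, the element
`z·e_i = s_i⁻¹ - s_i + z·1`. -/
def BMWe (C : Type) [CommRing C] (z : Cˣ) {n : ℕ} (i : Fin n) :
    FreeAlgebra C (Fin n ⊕ Fin n) :=
  ι C (Sum.inr i) - ι C (Sum.inl i) + (z : C) • 1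

/-- Defining relations of the Birman–Murakami–Wenzl algebra with `n` generators
`s_1, …, s_n` (the paper's `BMW_{n+1}`), over a commutative ring `C` with invertible
parameters `a` and `z` (in the paper `z = q - q⁻¹`).  The relations involving
`e_i = (s_i⁻¹ - s_i)/z + 1` are written multiplied through by the unit `z`,
using `z·e_i = s_i⁻¹ - s_i + z·1`, which is equivalent since `z` is invertible. -/
inductive BMWRel (C : Type) [CommRing C] (a z : Cˣ) (n : ℕ) :
    FreeAlgebra C (Fin n ⊕ Fin n) → FreeAlgebra C (Fin n ⊕ Fin n) → Prop
  | mul_inv (i : Fin n) :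
      BMWRel C a z n (ι C (Sum.inl i) * ι C (Sum.inr i)) 1
  | inv_mul (i : Fin n) :
      BMWRel C a z n (ι C (Sum.inr i) * ι C (Sum.inl i)) 1
  | comm (i j : Fin n) (h : (i : ℕ) + 2 ≤ (j : ℕ)) :
      BMWRel C a z n (ι C (Sum.inl i) * ι C (Sum.inl j))
        (ι C (Sum.inl j) * ι C (Sum.inl i))
  | braid (i j : Fin n) (h : (j : ℕ) = (i : ℕ) + 1) :
      BMWRel C a z n (ι C (Sum.inl i) * ι C (Sum.inl j) * ι C (Sum.inl i))
        (ι C (Sum.inl j) * ι C (Sum.inl i) * ι C (Sum.inl j))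
  | es (i : Fin n) :
      BMWRel C a z n (BMWe C z i * ι C (Sum.inl i)) (((a⁻¹ : Cˣ) : C) • BMWe C z i)
  | ese (i j : Fin n) (h : (j : ℕ) = (i : ℕ) + 1) :
      BMWRel C a z n (BMWe C z i * ι C (Sum.inl j) * BMWe C z i)
        (((z : C) * (a : C)) • BMWe C z i)
  | esinve (i j : Fin n) (h : (j : ℕ) = (i : ℕ) + 1) :
      BMWRel C a z n (BMWe C z i * ι C (Sum.inr j) * BMWe C z i)
        (((z : C) * ((a⁻¹ : Cˣ) : C)) • BMWe C z i)

/-- The Birman–Murakami–Wenzl algebra with `n` generators (the paper's `BMW_{n+1}`). -/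
abbrev BMW (C : Type) [CommRing C] (a z : Cˣ) (n : ℕ) : Type :=
  RingQuot (BMWRel C a z n)

variable {C : Type} [CommRing C] {a z : Cˣ} {n : ℕ}

/-- The generator `s_{i+1}`. -/
def BMW.S (i : Fin n) : BMW C a z n :=
  RingQuot.mkAlgHom C (BMWRel C a z n) (ι C (Sum.inl i))

/-- The inverse generator `s_{i+1}⁻¹`. -/
def BMW.Sinv (i : Fin n) : BMW C a z n :=
  RingQuot.mkAlgHom C (BMWRel C a z n) (ι C (Sum.inr i))

/-- The element `e_{i+1} = (s_{i+1}⁻¹ - s_{i+1})/z + 1`. -/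
def BMW.e (i : Fin n) : BMW C a z n :=
  ((z⁻¹ : Cˣ) : C) • (BMW.Sinv i - BMW.S i) + 1

lemma BMW.S_mul_Sinv (i : Fin n) : BMW.S (a := a) (z := z) i * BMW.Sinv i = 1 := by
  have := RingQuot.mkAlgHom_rel C (BMWRel.mul_inv (C := C) (a := a) (z := z) i)
  simpa only [map_mul, map_one, BMW.S, BMW.Sinv] using this

lemma BMW.Sinv_mul_S (i : Fin n) : BMW.Sinv (a := a) (z := z) i * BMW.S i = 1 := by
  have := RingQuot.mkAlgHom_rel C (BMWRel.inv_mul (C := C) (a := a) (z := z) i)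
  simpa only [map_mul, map_one, BMW.S, BMW.Sinv] using this

/-- The generator `s_{i+1}` as a unit. -/
def BMW.sU (i : Fin n) : (BMW C a z n)ˣ :=
  ⟨BMW.S i, BMW.Sinv i, BMW.S_mul_Sinv i, BMW.Sinv_mul_S i⟩

lemma BMW.S_comm (i j : Fin n) (h : (i : ℕ) + 2 ≤ (j : ℕ)) :
    BMW.S (a := a) (z := z) i * BMW.S j = BMW.S j * BMW.S i := by
  have := RingQuot.mkAlgHom_rel C (BMWRel.comm (C := C) (a := a) (z := z) i j h)
  simpa only [map_mul, BMW.S, BMW.Sinv] using this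

lemma BMW.S_braid (i j : Fin n) (h : (j : ℕ) = (i : ℕ) + 1) :
    BMW.S (a := a) (z := z) i * BMW.S j * BMW.S i = BMW.S j * BMW.S i * BMW.S j := by
  have := RingQuot.mkAlgHom_rel C (BMWRel.braid (C := C) (a := a) (z := z) i j h)
  simpa only [map_mul, BMW.S, BMW.Sinv] using this

/-- The image of `z·e_i` in the BMW algebra. -/
lemma BMW.mk_BMWe (i : Fin n) :
    RingQuot.mkAlgHom C (BMWRel C a z n) (BMWe C z i)
      = BMW.Sinv i - BMW.S i + (z : C) • 1 := by
  simp only [BMWe, map_add, map_sub, map_smul, map_one]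
  rfl

lemma BMW.Es (i : Fin n) :
    (BMW.Sinv (a := a) (z := z) i - BMW.S i + (z : C) • 1) * BMW.S i
      = ((a⁻¹ : Cˣ) : C) • (BMW.Sinv i - BMW.S i + (z : C) • 1) := by
  have := RingQuot.mkAlgHom_rel C (BMWRel.es (C := C) (a := a) (z := z) i)
  simpa only [map_mul, map_smul, BMW.mk_BMWe, BMW.S, BMW.Sinv] using this

lemma BMW.EsE (i j : Fin n) (h : (j : ℕ) = (i : ℕ) + 1) :
    (BMW.Sinv (a := a) (z := z) i - BMW.S i + (z : C) • 1) * BMW.S j *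
        (BMW.Sinv i - BMW.S i + (z : C) • 1)
      = ((z : C) * (a : C)) • (BMW.Sinv i - BMW.S i + (z : C) • 1) := by
  have := RingQuot.mkAlgHom_rel C (BMWRel.ese (C := C) (a := a) (z := z) i j h)
  simpa only [map_mul, map_smul, BMW.mk_BMWe, BMW.S, BMW.Sinv] using this

lemma BMW.EsinvE (i j : Fin n) (h : (j : ℕ) = (i : ℕ) + 1) :
    (BMW.Sinv (a := a) (z := z) i - BMW.S i + (z : C) • 1) * BMW.Sinv j *
        (BMW.Sinv i - BMW.S i + (z : C) • 1)
      = ((z : C) * ((a⁻¹ : Cˣ) : C)) • (BMW.Sinv i - BMW.S i + (z : C) • 1) := by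
  have := RingQuot.mkAlgHom_rel C (BMWRel.esinve (C := C) (a := a) (z := z) i j h)
  simpa only [map_mul, map_smul, BMW.mk_BMWe, BMW.S, BMW.Sinv] using this

/-- The natural embedding `BMW_{m+1} → BMW_{n+1}` (`ι` iterated). -/
def BMW.ιle {m n : ℕ} (h : m ≤ n) : BMW C a z m →ₐ[C] BMW C a z n :=
  RingQuot.liftAlgHom C ⟨FreeAlgebra.lift C
      (Sum.elim (fun i => BMW.S (Fin.castLE h i)) (fun i => BMW.Sinv (Fin.castLE h i))), by
    rintro x y hxy
    induction hxy with
    | mul_inv i =>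
        simp only [map_mul, map_one, FreeAlgebra.lift_ι_apply, Sum.elim_inl, Sum.elim_inr]
        exact BMW.S_mul_Sinv _
    | inv_mul i =>
        simp only [map_mul, map_one, FreeAlgebra.lift_ι_apply, Sum.elim_inl, Sum.elim_inr]
        exact BMW.Sinv_mul_S _
    | comm i j hij =>
        simp only [map_mul, FreeAlgebra.lift_ι_apply, Sum.elim_inl]
        exact BMW.S_comm _ _ (by simpa using hij)
    | braid i j hij =>
        simp only [map_mul, FreeAlgebra.lift_ι_apply, Sum.elim_inl]
        exact BMW.S_braid _ _ (by simpa using hij)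
    | es i =>
        simp only [BMWe, map_mul, map_add, map_sub, map_one, map_smul,
          FreeAlgebra.lift_ι_apply, Sum.elim_inl, Sum.elim_inr]
        exact BMW.Es _
    | ese i j hij =>
        simp only [BMWe, map_mul, map_add, map_sub, map_one, map_smul,
          FreeAlgebra.lift_ι_apply, Sum.elim_inl, Sum.elim_inr]
        exact BMW.EsE _ _ (by simpa using hij)
    | esinve i j hij =>
        simp only [BMWe, map_mul, map_add, map_sub, map_one, map_smul,
          FreeAlgebra.lift_ι_apply, Sum.elim_inl, Sum.elim_inr]
        exact BMW.EsinvE _ _ (by simpa using hij)⟩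


/-- A transverse Markov trace on the tower of BMW algebras: a family of `R`-linear maps
with the trace property and only the positive stabilization property. -/
def IsBMWTransverseTrace {C : Type} [CommRing C] (a z : Cˣ)
    (t : ∀ m : ℕ, BMW C a z m →ₗ[C] C) : Prop :=
  (∀ (m : ℕ) (u v : BMW C a z m), t m (u * v) = t m (v * u)) ∧
  (∀ (m : ℕ) (u v : BMW C a z m),
    t (m + 1) (BMW.ιle (Nat.le_succ m) u * BMW.S (Fin.last m) *
        BMW.ιle (Nat.le_succ m) v) = (a : C) * t m (u * v))

namespace BMWAux

variable {C : Type} [CommRing C] {a z : Cˣ} {n : ℕ}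

/-- `Z i = z • e i = s_i⁻¹ - s_i + z`. -/
def Z (i : Fin n) : BMW C a z n := BMW.Sinv i - BMW.S i + (z : C) • 1

lemma e_eq_smul_Z (i : Fin n) :
    BMW.e (a := a) (z := z) i = ((z⁻¹ : Cˣ) : C) • Z i := by
  have hz : ((z⁻¹ : Cˣ) : C) * (z : C) = 1 := z.inv_mul
  simp only [BMW.e, Z, smul_add, smul_smul, hz, one_smul]

lemma Z_mul_S (i : Fin n) :
    Z (a := a) (z := z) i * BMW.S i = ((a⁻¹ : Cˣ) : C) • Z i := BMW.Es i

lemma Z_mul_Sinv (i : Fin n) :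
    Z (a := a) (z := z) i * BMW.Sinv i = (a : C) • Z i := by
  have h1 : Z (a := a) (z := z) i = ((a⁻¹ : Cˣ) : C) • (Z i * BMW.Sinv i) := by
    conv_lhs => rw [← mul_one (Z (a := a) (z := z) i), ← BMW.S_mul_Sinv i, ← mul_assoc,
      Z_mul_S, smul_mul_assoc]
  calc Z (a := a) (z := z) i * BMW.Sinv i
      = ((a : C) * ((a⁻¹ : Cˣ) : C)) • (Z i * BMW.Sinv i) := by
        rw [a.mul_inv, one_smul]
    _ = (a : C) • Z i := by rw [mul_smul, ← h1]

lemma S_mul_Z (i : Fin n) :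
    BMW.S (a := a) (z := z) i * Z i = Z i * BMW.S i := by
  simp only [Z, mul_add, mul_sub, add_mul, sub_mul, BMW.S_mul_Sinv, BMW.Sinv_mul_S,
    mul_smul_comm, smul_mul_assoc, mul_one, one_mul]

lemma Sinv_mul_Z (i : Fin n) :
    BMW.Sinv (a := a) (z := z) i * Z i = Z i * BMW.Sinv i := by
  simp only [Z, mul_add, mul_sub, add_mul, sub_mul, BMW.S_mul_Sinv, BMW.Sinv_mul_S,
    mul_smul_comm, smul_mul_assoc, mul_one, one_mul]

lemma Sinv_mul_Z' (i : Fin n) :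
    BMW.Sinv (a := a) (z := z) i * Z i = (a : C) • Z i := by
  rw [Sinv_mul_Z, Z_mul_Sinv]

lemma Z_sq (i : Fin n) :
    Z (a := a) (z := z) i * Z i
      = ((a : C) - ((a⁻¹ : Cˣ) : C) + (z : C)) • Z i := by
  calc Z (a := a) (z := z) i * Z i
      = Z i * BMW.Sinv i - Z i * BMW.S i + (z : C) • Z i := by
        simp only [Z, mul_add, mul_sub, mul_smul_comm, mul_one]
    _ = ((a : C) - ((a⁻¹ : Cˣ) : C) + (z : C)) • Z i := by
        rw [Z_mul_Sinv, Z_mul_S, add_smul, sub_smul]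

/-- `s_i s_j s_i⁻¹ = s_j⁻¹ s_i s_j` for `j = i+1`. -/
lemma braid_inv (i j : Fin n) (h : (j : ℕ) = (i : ℕ) + 1) :
    BMW.S (a := a) (z := z) i * BMW.S j * BMW.Sinv i
      = BMW.Sinv j * (BMW.S i * BMW.S j) := by
  have hb := BMW.S_braid (a := a) (z := z) i j h
  have h1 : BMW.Sinv (a := a) (z := z) j * (BMW.S i * BMW.S j * BMW.S i)
      = BMW.S i * BMW.S j := by
    rw [hb]
    calc BMW.Sinv (a := a) (z := z) j * (BMW.S j * BMW.S i * BMW.S j)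
        = BMW.Sinv j * BMW.S j * (BMW.S i * BMW.S j) := by noncomm_ring
      _ = BMW.S i * BMW.S j := by rw [BMW.Sinv_mul_S, one_mul]
  calc BMW.S (a := a) (z := z) i * BMW.S j * BMW.Sinv i
      = BMW.Sinv j * (BMW.S i * BMW.S j * BMW.S i) * BMW.Sinv i := by rw [h1]
    _ = BMW.Sinv j * (BMW.S i * BMW.S j) * (BMW.S i * BMW.Sinv i) := by noncomm_ring
    _ = BMW.Sinv j * (BMW.S i * BMW.S j) := by rw [BMW.S_mul_Sinv, mul_one]

/-- Conjugation by `s_i s_j` sends `Z i` to `Z j` for `j = i+1`. -/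
lemma conj_Z (i j : Fin n) (h : (j : ℕ) = (i : ℕ) + 1) :
    BMW.S (a := a) (z := z) i * BMW.S j * Z i = Z j * (BMW.S i * BMW.S j) := by
  simp only [Z, mul_add, mul_sub, add_mul, sub_mul, mul_smul_comm, smul_mul_assoc,
    mul_one, one_mul]
  rw [show BMW.S (a := a) (z := z) i * BMW.S j * BMW.S i
      = BMW.S j * (BMW.S i * BMW.S j) by rw [BMW.S_braid i j h]; noncomm_ring,
    braid_inv i j h]


lemma Z_succ (i j : Fin n) (h : (j : ℕ) = (i : ℕ) + 1) :
    Z (a := a) (z := z) j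
      = (BMW.S i * BMW.S j) * Z i * (BMW.Sinv j * BMW.Sinv i) := by
  have hWW : (BMW.S (a := a) (z := z) i * BMW.S j) * (BMW.Sinv j * BMW.Sinv i) = 1 := by
    calc (BMW.S (a := a) (z := z) i * BMW.S j) * (BMW.Sinv j * BMW.Sinv i)
        = BMW.S i * (BMW.S j * BMW.Sinv j) * BMW.Sinv i := by noncomm_ring
      _ = 1 := by rw [BMW.S_mul_Sinv, mul_one, BMW.S_mul_Sinv]
  calc Z (a := a) (z := z) j
      = Z j * ((BMW.S i * BMW.S j) * (BMW.Sinv j * BMW.Sinv i)) := by rw [hWW, mul_one]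
    _ = (Z j * (BMW.S i * BMW.S j)) * (BMW.Sinv j * BMW.Sinv i) := by noncomm_ring
    _ = (BMW.S i * BMW.S j) * Z i * (BMW.Sinv j * BMW.Sinv i) := by rw [← conj_Z i j h]

lemma ZsZ (i j : Fin n) (h : (j : ℕ) = (i : ℕ) + 1) :
    Z (a := a) (z := z) j * BMW.S i * Z j = ((z : C) * (a : C)) • Z j := by
  set W : BMW C a z n := BMW.S i * BMW.S j with hW
  set Winv : BMW C a z n := BMW.Sinv j * BMW.Sinv i with hWinv
  have hWW : W * Winv = 1 := by
    calc W * Winv = BMW.S i * (BMW.S j * BMW.Sinv j) * BMW.Sinv i := by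
          rw [hW, hWinv]; noncomm_ring
      _ = 1 := by rw [BMW.S_mul_Sinv, mul_one, BMW.S_mul_Sinv]
  have hWW' : Winv * W = 1 := by
    calc Winv * W = BMW.Sinv j * (BMW.Sinv i * BMW.S i) * BMW.S j := by
          rw [hW, hWinv]; noncomm_ring
      _ = 1 := by rw [BMW.Sinv_mul_S, mul_one, BMW.Sinv_mul_S]
  have hZj : Z (a := a) (z := z) j = W * Z i * Winv := by
    calc Z (a := a) (z := z) j = Z j * (W * Winv) := by rw [hWW, mul_one]
      _ = Z j * W * Winv := (mul_assoc _ _ _).symm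
      _ = W * Z i * Winv := by rw [← conj_Z i j h]
  have hmid : Winv * BMW.S i * W = BMW.S i * BMW.S j * BMW.Sinv i := by
    calc Winv * BMW.S (a := a) (z := z) i * W
        = BMW.Sinv j * (BMW.Sinv i * BMW.S i) * (BMW.S i * BMW.S j) := by
          rw [hW, hWinv]; noncomm_ring
      _ = BMW.Sinv j * (BMW.S i * BMW.S j) := by rw [BMW.Sinv_mul_S, mul_one]
      _ = BMW.S i * BMW.S j * BMW.Sinv i := (braid_inv i j h).symm
  have hcore : Z (a := a) (z := z) i * (BMW.S i * BMW.S j * BMW.Sinv i) * Z i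
      = ((z : C) * (a : C)) • Z i := by
    calc Z (a := a) (z := z) i * (BMW.S i * BMW.S j * BMW.Sinv i) * Z i
        = (Z i * BMW.S i) * BMW.S j * (BMW.Sinv i * Z i) := by noncomm_ring
      _ = (((a⁻¹ : Cˣ) : C) • Z i) * BMW.S j * ((a : C) • Z i) := by
          rw [Z_mul_S, Sinv_mul_Z']
      _ = (((a⁻¹ : Cˣ) : C) * (a : C)) • (Z i * BMW.S j * Z i) := by
          simp only [smul_mul_assoc, mul_smul_comm, smul_smul]
          rw [mul_comm ((a : C))]
      _ = Z i * BMW.S j * Z i := by rw [a.inv_mul, one_smul]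
      _ = ((z : C) * (a : C)) • Z i := by
          have := BMW.EsE (a := a) (z := z) i j h
          simpa only [Z] using this
  calc Z (a := a) (z := z) j * BMW.S i * Z j
      = (W * Z i * Winv) * BMW.S i * (W * Z i * Winv) := by rw [← hZj]
    _ = W * (Z i * (Winv * BMW.S i * W) * Z i) * Winv := by noncomm_ring
    _ = W * (((z : C) * (a : C)) • Z i) * Winv := by rw [hmid, hcore]
    _ = ((z : C) * (a : C)) • (W * Z i * Winv) := by
        simp only [smul_mul_assoc, mul_smul_comm]
    _ = ((z : C) * (a : C)) • Z j := by rw [← hZj]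

lemma ιle_S {m n : ℕ} (h : m ≤ n) (i : Fin m) :
    BMW.ιle (C := C) (a := a) (z := z) h (BMW.S i) = BMW.S (Fin.castLE h i) := by
  simp only [BMW.ιle, BMW.S, RingQuot.liftAlgHom_mkAlgHom_apply, FreeAlgebra.lift_ι_apply,
    Sum.elim_inl]

lemma ιle_Sinv {m n : ℕ} (h : m ≤ n) (i : Fin m) :
    BMW.ιle (C := C) (a := a) (z := z) h (BMW.Sinv i) = BMW.Sinv (Fin.castLE h i) := by
  simp only [BMW.ιle, BMW.Sinv, RingQuot.liftAlgHom_mkAlgHom_apply, FreeAlgebra.lift_ι_apply,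
    Sum.elim_inr]

lemma ιle_Z {m n : ℕ} (h : m ≤ n) (i : Fin m) :
    BMW.ιle (C := C) (a := a) (z := z) h (Z i) = Z (Fin.castLE h i) := by
  simp only [Z, map_add, map_sub, map_smul, map_one, ιle_S, ιle_Sinv]

lemma ιle_ιle {m k n : ℕ} (h1 : m ≤ k) (h2 : k ≤ n) (x : BMW C a z m) :
    BMW.ιle (a := a) (z := z) h2 (BMW.ιle h1 x) = BMW.ιle (h1.trans h2) x := by
  obtain ⟨y, rfl⟩ := RingQuot.mkAlgHom_surjective C (BMWRel C a z m) x
  induction y using FreeAlgebra.induction with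
  | grade0 c =>
      rw [show RingQuot.mkAlgHom C (BMWRel C a z m) (algebraMap C _ c)
          = algebraMap C _ c from AlgHom.commutes _ c]
      simp only [AlgHom.commutes]
  | grade1 x =>
      cases x with
      | inl i =>
          rw [show RingQuot.mkAlgHom C (BMWRel C a z m) (ι C (Sum.inl i))
              = BMW.S (a := a) (z := z) i from rfl]
          simp only [ιle_S]
          rfl
      | inr i =>
          rw [show RingQuot.mkAlgHom C (BMWRel C a z m) (ι C (Sum.inr i))
              = BMW.Sinv (a := a) (z := z) i from rfl]
          simp only [ιle_Sinv]
          rfl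
  | mul x y hx hy => simp only [map_mul, hx, hy]
  | add x y hx hy => simp only [map_add, hx, hy]

/-- Far commutation: `Sinv`/`S` versions, derived from the `S`–`S` relation via units. -/
lemma commute_far (i j : Fin n) (h : (i : ℕ) + 2 ≤ (j : ℕ)) :
    Commute (BMW.S (a := a) (z := z) i) (BMW.S j) ∧
    Commute (BMW.S (a := a) (z := z) i) (BMW.Sinv j) ∧
    Commute (BMW.Sinv (a := a) (z := z) i) (BMW.S j) ∧
    Commute (BMW.Sinv (a := a) (z := z) i) (BMW.Sinv j) := by
  have h1 : Commute ((BMW.sU (a := a) (z := z) i : (BMW C a z n)ˣ) : BMW C a z n)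
      ((BMW.sU (a := a) (z := z) j : (BMW C a z n)ˣ) : BMW C a z n) :=
    BMW.S_comm i j h
  refine ⟨h1, h1.units_inv_right, h1.units_inv_left, h1.units_inv_left.units_inv_right⟩

/-- Every element in the image of `BMW.ιle h` commutes with `S j` and `Sinv j`
whenever `m + 1 ≤ j`. -/
lemma ιle_commute {m n : ℕ} (h : m ≤ n) (x : BMW C a z m) (j : Fin n)
    (hj : m + 1 ≤ (j : ℕ)) :
    Commute (BMW.ιle (a := a) (z := z) h x) (BMW.S j) ∧
    Commute (BMW.ιle (a := a) (z := z) h x) (BMW.Sinv j) := by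
  obtain ⟨y, rfl⟩ := RingQuot.mkAlgHom_surjective C (BMWRel C a z m) x
  induction y using FreeAlgebra.induction with
  | grade0 c =>
      rw [show RingQuot.mkAlgHom C (BMWRel C a z m) (algebraMap C _ c)
          = algebraMap C _ c from AlgHom.commutes _ c]
      simp only [AlgHom.commutes]
      exact ⟨Algebra.commutes c _, Algebra.commutes c _⟩
  | grade1 x =>
      have key : ∀ i : Fin m, ((Fin.castLE h i : Fin n) : ℕ) + 2 ≤ (j : ℕ) := by
        intro i
        have := i.isLt
        simp only [Fin.coe_castLE]
        omega
      cases x with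
      | inl i =>
          rw [show RingQuot.mkAlgHom C (BMWRel C a z m) (ι C (Sum.inl i))
              = BMW.S (a := a) (z := z) i from rfl, ιle_S]
          exact ⟨(commute_far _ j (key i)).1, (commute_far _ j (key i)).2.1⟩
      | inr i =>
          rw [show RingQuot.mkAlgHom C (BMWRel C a z m) (ι C (Sum.inr i))
              = BMW.Sinv (a := a) (z := z) i from rfl, ιle_Sinv]
          exact ⟨(commute_far _ j (key i)).2.2.1, (commute_far _ j (key i)).2.2.2⟩
  | mul x y hx hy =>
      simp only [map_mul]
      exact ⟨hx.1.mul_left hy.1, hx.2.mul_left hy.2⟩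
  | add x y hx hy =>
      simp only [map_add]
      exact ⟨hx.1.add_left hy.1, hx.2.add_left hy.2⟩

lemma ιle_commute_Z {m n : ℕ} (h : m ≤ n) (x : BMW C a z m) (j : Fin n)
    (hj : m + 1 ≤ (j : ℕ)) :
    Commute (BMW.ιle (a := a) (z := z) h x) (Z j) := by
  obtain ⟨h1, h2⟩ := ιle_commute h x j hj
  exact ((h2.sub_right h1).add_right ((Commute.one_right _).smul_right _))

end BMWAux

/-- For a transverse Markov trace `(τ_n)` on the tower of BMW algebras,
for all `n ≥ 1` and `v ∈ BMW_n`: `τ_{n+2}(v e_{n+1}) = δ τ_{n+1}(v e_n)`, where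
`δ = (a−a⁻¹)/(q−q⁻¹) + 1`. -/
theorem bmw_transverse_trace_e_reduction (C : Type) [CommRing C] (a q z : Cˣ)
    (hz : (z : C) = (q : C) - ((q⁻¹ : Cˣ) : C))
    (t : ∀ m : ℕ, BMW C a z m →ₗ[C] C) (ht : IsBMWTransverseTrace a z t) :
    ∀ (m : ℕ) (v : BMW C a z m),
      t (m + 2) (BMW.ιle (by omega) v * BMW.e (Fin.last (m + 1)))
        = (((a : C) - ((a⁻¹ : Cˣ) : C)) * ((z⁻¹ : Cˣ) : C) + 1) *
            t (m + 1) (BMW.ιle (Nat.le_succ m) v * BMW.e (Fin.last m)) := by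
  intro m v
  obtain ⟨htr, hM⟩ := ht
  have h01 : m ≤ m + 1 := Nat.le_succ m
  have h12 : m + 1 ≤ m + 2 := Nat.le_succ (m + 1)
  have h02 : m ≤ m + 2 := h01.trans h12
  have key : t (m + 2) (BMW.ιle h02 v * BMW.e (Fin.last (m + 1)))
      = (((a : C) - ((a⁻¹ : Cˣ) : C)) * ((z⁻¹ : Cˣ) : C) + 1) *
          t (m + 1) (BMW.ιle h01 v * BMW.e (Fin.last m)) := by
    have hij : ((Fin.last (m + 1) : Fin (m + 2)) : ℕ)
        = ((Fin.castLE h12 (Fin.last m) : Fin (m + 2)) : ℕ) + 1 := rfl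
    have hjv : m + 1 ≤ ((Fin.last (m + 1) : Fin (m + 2)) : ℕ) := le_of_eq rfl
    have hcV := BMWAux.ιle_commute h02 v (Fin.last (m + 1)) hjv
    have hVZj := (BMWAux.ιle_commute_Z h02 v (Fin.last (m + 1)) hjv).eq
    -- Markov step
    have hMk : t (m + 2) ((BMW.ιle h02 v * BMW.S (Fin.castLE h12 (Fin.last m))) * BMW.S (Fin.last (m + 1) : Fin (m + 2)) * (BMW.Sinv (Fin.castLE h12 (Fin.last m)) * BMWAux.Z (Fin.castLE h12 (Fin.last m))))
        = (a : C) * t (m + 1) ((BMW.ιle h01 v * BMW.S (Fin.last m)) * (BMW.Sinv (Fin.last m) * BMWAux.Z (Fin.last m))) := by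
      have h := hM (m + 1) (BMW.ιle h01 v * BMW.S (Fin.last m)) (BMW.Sinv (Fin.last m) * BMWAux.Z (Fin.last m))
      simpa only [map_mul, BMWAux.ιle_S, BMWAux.ιle_Sinv, BMWAux.ιle_Z,
        BMWAux.ιle_ιle] using h
    have hu' : (BMW.ιle h01 v * BMW.S (Fin.last m)) * (BMW.Sinv (Fin.last m) * BMWAux.Z (Fin.last m)) = BMW.ιle h01 v * BMWAux.Z (Fin.last m) := by
      calc (BMW.ιle h01 v * BMW.S (Fin.last m)) * (BMW.Sinv (Fin.last m) * BMWAux.Z (Fin.last m))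
          = BMW.ιle h01 v * (BMW.S (Fin.last m) * BMW.Sinv (Fin.last m)) * BMWAux.Z (Fin.last m) := by noncomm_ring
        _ = BMW.ιle h01 v * BMWAux.Z (Fin.last m) := by rw [BMW.S_mul_Sinv, mul_one]
    -- Step B
    have e1 : BMW.ιle h02 v * BMWAux.Z (Fin.last (m + 1) : Fin (m + 2)) * BMW.S (Fin.castLE h12 (Fin.last m))
        = (BMW.ιle h02 v * (BMW.S (Fin.castLE h12 (Fin.last m)) * BMW.S (Fin.last (m + 1) : Fin (m + 2))) * BMWAux.Z (Fin.castLE h12 (Fin.last m))) * ((BMW.Sinv (Fin.last (m + 1) : Fin (m + 2)) * BMW.Sinv (Fin.castLE h12 (Fin.last m))) * BMW.S (Fin.castLE h12 (Fin.last m))) := by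
      rw [BMWAux.Z_succ (C := C) (a := a) (z := z) _ _ hij]; noncomm_ring
    have e2 : (BMW.Sinv (C := C) (a := a) (z := z) (Fin.last (m + 1) : Fin (m + 2)) * BMW.Sinv (Fin.castLE h12 (Fin.last m))) * BMW.S (Fin.castLE h12 (Fin.last m)) = BMW.Sinv (Fin.last (m + 1) : Fin (m + 2)) := by
      rw [mul_assoc, BMW.Sinv_mul_S, mul_one]
    have e3 : BMW.Sinv (Fin.last (m + 1) : Fin (m + 2)) * (BMW.ιle h02 v * (BMW.S (Fin.castLE h12 (Fin.last m)) * BMW.S (Fin.last (m + 1) : Fin (m + 2))) * BMWAux.Z (Fin.castLE h12 (Fin.last m)))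
        = (BMW.ιle h02 v * BMW.S (Fin.castLE h12 (Fin.last m))) * BMW.S (Fin.last (m + 1) : Fin (m + 2)) * (BMW.Sinv (Fin.castLE h12 (Fin.last m)) * BMWAux.Z (Fin.castLE h12 (Fin.last m))) := by
      calc BMW.Sinv (Fin.last (m + 1) : Fin (m + 2)) * (BMW.ιle h02 v * (BMW.S (Fin.castLE h12 (Fin.last m)) * BMW.S (Fin.last (m + 1) : Fin (m + 2))) * BMWAux.Z (Fin.castLE h12 (Fin.last m)))
          = (BMW.Sinv (Fin.last (m + 1) : Fin (m + 2)) * BMW.ιle h02 v) * ((BMW.S (Fin.castLE h12 (Fin.last m)) * BMW.S (Fin.last (m + 1) : Fin (m + 2))) * BMWAux.Z (Fin.castLE h12 (Fin.last m))) := by noncomm_ring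
        _ = (BMW.ιle h02 v * BMW.Sinv (Fin.last (m + 1) : Fin (m + 2))) * ((BMW.S (Fin.castLE h12 (Fin.last m)) * BMW.S (Fin.last (m + 1) : Fin (m + 2))) * BMWAux.Z (Fin.castLE h12 (Fin.last m))) := by rw [← hcV.2.eq]
        _ = BMW.ιle h02 v * (BMW.Sinv (Fin.last (m + 1) : Fin (m + 2)) * (BMW.S (Fin.castLE h12 (Fin.last m)) * BMW.S (Fin.last (m + 1) : Fin (m + 2)))) * BMWAux.Z (Fin.castLE h12 (Fin.last m)) := by noncomm_ring
        _ = BMW.ιle h02 v * (BMW.S (Fin.castLE h12 (Fin.last m)) * BMW.S (Fin.last (m + 1) : Fin (m + 2)) * BMW.Sinv (Fin.castLE h12 (Fin.last m))) * BMWAux.Z (Fin.castLE h12 (Fin.last m)) := by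
            rw [← BMWAux.braid_inv (C := C) (a := a) (z := z) _ _ hij]
        _ = (BMW.ιle h02 v * BMW.S (Fin.castLE h12 (Fin.last m))) * BMW.S (Fin.last (m + 1) : Fin (m + 2)) * (BMW.Sinv (Fin.castLE h12 (Fin.last m)) * BMWAux.Z (Fin.castLE h12 (Fin.last m))) := by noncomm_ring
    have hB : t (m + 2) (BMW.ιle h02 v * BMWAux.Z (Fin.last (m + 1) : Fin (m + 2)) * BMW.S (Fin.castLE h12 (Fin.last m))) = (a : C) * t (m + 1) (BMW.ιle h01 v * BMWAux.Z (Fin.last m)) := by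
      calc t (m + 2) (BMW.ιle h02 v * BMWAux.Z (Fin.last (m + 1) : Fin (m + 2)) * BMW.S (Fin.castLE h12 (Fin.last m)))
          = t (m + 2) (((BMW.Sinv (Fin.last (m + 1) : Fin (m + 2)) * BMW.Sinv (Fin.castLE h12 (Fin.last m))) * BMW.S (Fin.castLE h12 (Fin.last m))) * (BMW.ιle h02 v * (BMW.S (Fin.castLE h12 (Fin.last m)) * BMW.S (Fin.last (m + 1) : Fin (m + 2))) * BMWAux.Z (Fin.castLE h12 (Fin.last m)))) := by
            rw [e1, htr]
        _ = t (m + 2) ((BMW.ιle h02 v * BMW.S (Fin.castLE h12 (Fin.last m))) * BMW.S (Fin.last (m + 1) : Fin (m + 2)) * (BMW.Sinv (Fin.castLE h12 (Fin.last m)) * BMWAux.Z (Fin.castLE h12 (Fin.last m)))) := by rw [e2, e3]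
        _ = (a : C) * t (m + 1) (BMW.ιle h01 v * BMWAux.Z (Fin.last m)) := by rw [hMk, hu']
    -- Step A
    have e4 : BMW.ιle h02 v * (BMWAux.Z (Fin.last (m + 1) : Fin (m + 2)) * BMW.S (Fin.castLE h12 (Fin.last m)) * BMWAux.Z (Fin.last (m + 1) : Fin (m + 2))) = (BMW.ιle h02 v * BMWAux.Z (Fin.last (m + 1) : Fin (m + 2)) * BMW.S (Fin.castLE h12 (Fin.last m))) * BMWAux.Z (Fin.last (m + 1) : Fin (m + 2)) := by noncomm_ring
    have e5 : BMWAux.Z (Fin.last (m + 1) : Fin (m + 2)) * (BMW.ιle h02 v * BMWAux.Z (Fin.last (m + 1) : Fin (m + 2)) * BMW.S (Fin.castLE h12 (Fin.last m))) = (BMW.ιle h02 v * (BMWAux.Z (Fin.last (m + 1) : Fin (m + 2)) * BMWAux.Z (Fin.last (m + 1) : Fin (m + 2)))) * BMW.S (Fin.castLE h12 (Fin.last m)) := by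
      calc BMWAux.Z (Fin.last (m + 1) : Fin (m + 2)) * (BMW.ιle h02 v * BMWAux.Z (Fin.last (m + 1) : Fin (m + 2)) * BMW.S (Fin.castLE h12 (Fin.last m)))
          = (BMWAux.Z (Fin.last (m + 1) : Fin (m + 2)) * BMW.ιle h02 v) * (BMWAux.Z (Fin.last (m + 1) : Fin (m + 2)) * BMW.S (Fin.castLE h12 (Fin.last m))) := by noncomm_ring
        _ = (BMW.ιle h02 v * BMWAux.Z (Fin.last (m + 1) : Fin (m + 2))) * (BMWAux.Z (Fin.last (m + 1) : Fin (m + 2)) * BMW.S (Fin.castLE h12 (Fin.last m))) := by rw [← hVZj]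
        _ = (BMW.ιle h02 v * (BMWAux.Z (Fin.last (m + 1) : Fin (m + 2)) * BMWAux.Z (Fin.last (m + 1) : Fin (m + 2)))) * BMW.S (Fin.castLE h12 (Fin.last m)) := by noncomm_ring
    have hA : ((z : C) * (a : C)) * t (m + 2) (BMW.ιle h02 v * BMWAux.Z (Fin.last (m + 1) : Fin (m + 2)))
        = ((a : C) - ((a⁻¹ : Cˣ) : C) + (z : C)) * t (m + 2) (BMW.ιle h02 v * BMWAux.Z (Fin.last (m + 1) : Fin (m + 2)) * BMW.S (Fin.castLE h12 (Fin.last m))) := by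
      calc ((z : C) * (a : C)) * t (m + 2) (BMW.ιle h02 v * BMWAux.Z (Fin.last (m + 1) : Fin (m + 2)))
          = t (m + 2) (BMW.ιle h02 v * (((z : C) * (a : C)) • BMWAux.Z (Fin.last (m + 1) : Fin (m + 2)))) := by
            rw [mul_smul_comm, map_smul, smul_eq_mul]
        _ = t (m + 2) ((BMW.ιle h02 v * BMWAux.Z (Fin.last (m + 1) : Fin (m + 2)) * BMW.S (Fin.castLE h12 (Fin.last m))) * BMWAux.Z (Fin.last (m + 1) : Fin (m + 2))) := by
            rw [← BMWAux.ZsZ (C := C) (a := a) (z := z) (Fin.castLE h12 (Fin.last m)) (Fin.last (m + 1)) hij, e4]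
        _ = t (m + 2) ((BMW.ιle h02 v * (BMWAux.Z (Fin.last (m + 1) : Fin (m + 2)) * BMWAux.Z (Fin.last (m + 1) : Fin (m + 2)))) * BMW.S (Fin.castLE h12 (Fin.last m))) := by rw [htr, e5]
        _ = t (m + 2) ((((a : C) - ((a⁻¹ : Cˣ) : C) + (z : C)) • (BMW.ιle h02 v * BMWAux.Z (Fin.last (m + 1) : Fin (m + 2)) * BMW.S (Fin.castLE h12 (Fin.last m))))) := by
            rw [BMWAux.Z_sq (C := C) (a := a) (z := z), mul_smul_comm, smul_mul_assoc]
        _ = ((a : C) - ((a⁻¹ : Cˣ) : C) + (z : C)) * t (m + 2) (BMW.ιle h02 v * BMWAux.Z (Fin.last (m + 1) : Fin (m + 2)) * BMW.S (Fin.castLE h12 (Fin.last m))) := by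
            rw [map_smul, smul_eq_mul]
    have hcomb : ((z : C) * (a : C)) * t (m + 2) (BMW.ιle h02 v * BMWAux.Z (Fin.last (m + 1) : Fin (m + 2)))
        = ((a : C) - ((a⁻¹ : Cˣ) : C) + (z : C)) * ((a : C) * t (m + 1) (BMW.ιle h01 v * BMWAux.Z (Fin.last m))) := by
      rw [hA, hB]
    have h6 : ((z * a : Cˣ) : C) * t (m + 2) (BMW.ιle h02 v * BMWAux.Z (Fin.last (m + 1) : Fin (m + 2)))
        = ((z * a : Cˣ) : C) * (((z⁻¹ : Cˣ) : C) *
            (((a : C) - ((a⁻¹ : Cˣ) : C) + (z : C)) * t (m + 1) (BMW.ιle h01 v * BMWAux.Z (Fin.last m)))) := by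
      rw [Units.val_mul, hcomb]
      linear_combination (-((a : C) * (((a : C) - ((a⁻¹ : Cˣ) : C) + (z : C))) *
        t (m + 1) (BMW.ιle h01 v * BMWAux.Z (Fin.last m)))) * z.mul_inv
    have hX : t (m + 2) (BMW.ιle h02 v * BMWAux.Z (Fin.last (m + 1) : Fin (m + 2)))
        = ((z⁻¹ : Cˣ) : C) * (((a : C) - ((a⁻¹ : Cˣ) : C) + (z : C)) *
            t (m + 1) (BMW.ιle h01 v * BMWAux.Z (Fin.last m))) := (Units.mul_right_inj (z * a)).mp h6
    rw [BMWAux.e_eq_smul_Z, BMWAux.e_eq_smul_Z, mul_smul_comm, mul_smul_comm,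
      map_smul, map_smul, smul_eq_mul, smul_eq_mul, hX]
    linear_combination (((z⁻¹ : Cˣ) : C) *
      t (m + 1) (BMW.ιle h01 v * BMWAux.Z (Fin.last m))) * z.inv_mul
  exact key


end
end
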